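/- Let i, j, k be positive integers. Then every thick set S ⊆ ℕ contains a solution of the equation i·a + j·b = k·c (i.e., there exist a, b, c ∈ S with i·a + j·b = k·c) if and only if k ∈ {i, j, i+j}. -/
import Mathlib


/- `S ⊆ ℕ` is thick in `(ℕ,+)`: it contains arbitrarily long intervals
`{a+1, …, a+L}`. -/
def ThickSet (S : Set ℕ) : Prop :=
  ∀ L : ℕ, ∃ a : ℕ, ∀ i : ℕ, 1 ≤ i → i ≤ L → a + i ∈ S

private def thickF (K : ℕ) : ℕ → ℕ
  | 0 => 0
  | m + 1 => K * (thickF K m + m + (m + 1)) + 1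

private lemma thickF_mono (K : ℕ) (hK : 1 ≤ K) {q r : ℕ} (h : q ≤ r) :
    thickF K q + q ≤ thickF K r + r := by
  have : Monotone (fun m => thickF K m + m) := by
    apply monotone_nat_of_le_succ
    intro m
    have h1 := Nat.le_mul_of_pos_left (thickF K m + m + (m + 1)) hK
    simp only [thickF]
    omega
  exact this h

/-- For positive integers `i, j, k`: every thick set `S ⊆ ℕ` contains a solution of
`i·a + j·b = k·c` (with `a, b, c ∈ S`) if and only if `k ∈ {i, j, i+j}`. -/
theorem thick_solvable_iff (i j k : ℕ) (hi : 0 < i) (hj : 0 < j) (hk : 0 < k) :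
    (∀ S : Set ℕ, ThickSet S → ∃ a ∈ S, ∃ b ∈ S, ∃ c ∈ S, i * a + j * b = k * c) ↔
      (k = i ∨ k = j ∨ k = i + j) := by
  constructor
  · intro H
    by_contra hcon
    push_neg at hcon
    obtain ⟨hki, hkj, hkij⟩ := hcon
    have hK : 1 ≤ i + j + k := by omega
    set S : Set ℕ := {n | ∃ m t, 1 ≤ t ∧ t ≤ m ∧ n = thickF (i + j + k) m + t} with hSdef
    have hthick : ThickSet S := fun L =>
      ⟨thickF (i + j + k) L, fun t h1 h2 => ⟨L, t, h1, h2, rfl⟩⟩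
    obtain ⟨a, ha, b, hb, c, hc, heq⟩ := H S hthick
    obtain ⟨p, s, hs1, hs2, hae⟩ := ha
    obtain ⟨q, t, ht1, ht2, hbe⟩ := hb
    obtain ⟨r, u, hu1, hu2, hce⟩ := hc
    obtain ⟨M', hM⟩ : ∃ M', max p (max q r) = M' + 1 := ⟨max p (max q r) - 1, by omega⟩
    obtain ⟨B, hBdef⟩ : ∃ B, B = thickF (i + j + k) M' + M' := ⟨_, rfl⟩
    obtain ⟨x, hxdef⟩ : ∃ x, x = thickF (i + j + k) (M' + 1) := ⟨_, rfl⟩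
    have hx : x = (i + j + k) * (B + (M' + 1)) + 1 := by
      rw [hxdef, hBdef]
      rfl
    have dich : ∀ e pp tt : ℕ, 1 ≤ tt → tt ≤ pp → e = thickF (i + j + k) pp + tt →
        pp ≤ M' + 1 →
        (pp = M' + 1 ∧ x + 1 ≤ e ∧ e ≤ x + (M' + 1)) ∨ (pp ≤ M' ∧ 1 ≤ e ∧ e ≤ B) := by
      intro e pp tt h1 h2 he hp
      rcases Nat.lt_or_ge pp (M' + 1) with h | h
      · right
        have hm := thickF_mono (i + j + k) hK (show pp ≤ M' by omega)
        omega
      · left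
        have hpp : pp = M' + 1 := by omega
        subst hpp
        rw [← hxdef] at he
        omega
    have hA := dich a p s hs1 hs2 hae (by omega)
    have hB' := dich b q t ht1 ht2 hbe (by omega)
    have hC := dich c r u hu1 hu2 hce (by omega)
    rcases hA with ⟨hp, ha1, ha2⟩ | ⟨hp, ha1, ha2⟩ <;>
      rcases hB' with ⟨hq, hb1, hb2⟩ | ⟨hq, hb1, hb2⟩ <;>
        rcases hC with ⟨hr, hc1, hc2⟩ | ⟨hr, hc1, hc2⟩
    · -- all three high : needs k ≠ i + j
      rcases Nat.lt_or_ge k (i + j) with hlt | hge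
      · have h1 : i * (x + 1) ≤ i * a := Nat.mul_le_mul le_rfl ha1
        have h2 : j * (x + 1) ≤ j * b := Nat.mul_le_mul le_rfl hb1
        have h3 : k * c ≤ k * (x + (M' + 1)) := Nat.mul_le_mul le_rfl hc2
        have h4 : (k + 1) * (x + 1) ≤ (i + j) * (x + 1) :=
          Nat.mul_le_mul (by omega) le_rfl
        linarith [Nat.zero_le (i*B), Nat.zero_le (j*B), Nat.zero_le (k*B), Nat.zero_le (i*M'), Nat.zero_le (j*M'), Nat.zero_le (k*M'), Nat.zero_le (i*a), Nat.zero_le (j*b), Nat.zero_le (k*c)]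
      · have hge' : i + j + 1 ≤ k := by omega
        have h1 : i * a ≤ i * (x + (M' + 1)) := Nat.mul_le_mul le_rfl ha2
        have h2 : j * b ≤ j * (x + (M' + 1)) := Nat.mul_le_mul le_rfl hb2
        have h3 : k * (x + 1) ≤ k * c := Nat.mul_le_mul le_rfl hc1
        have h4 : (i + j + 1) * (x + 1) ≤ k * (x + 1) :=
          Nat.mul_le_mul hge' le_rfl
        linarith [Nat.zero_le (i*B), Nat.zero_le (j*B), Nat.zero_le (k*B), Nat.zero_le (i*M'), Nat.zero_le (j*M'), Nat.zero_le (k*M'), Nat.zero_le (i*a), Nat.zero_le (j*b), Nat.zero_le (k*c)]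
    · -- a, b high, c low
      have h1 : k * c ≤ k * B := Nat.mul_le_mul le_rfl hc2
      have h2 : a ≤ i * a := Nat.le_mul_of_pos_left a hi
      linarith [Nat.zero_le (i*B), Nat.zero_le (j*B), Nat.zero_le (k*B), Nat.zero_le (i*M'), Nat.zero_le (j*M'), Nat.zero_le (k*M'), Nat.zero_le (i*a), Nat.zero_le (j*b), Nat.zero_le (k*c)]
    · -- a, c high, b low : needs k ≠ i
      rcases Nat.lt_or_ge k i with hlt | hge
      · have h1 : (k + 1) * (x + 1) ≤ i * (x + 1) := Nat.mul_le_mul (by omega) le_rfl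
        have h2 : i * (x + 1) ≤ i * a := Nat.mul_le_mul le_rfl ha1
        have h3 : k * c ≤ k * (x + (M' + 1)) := Nat.mul_le_mul le_rfl hc2
        linarith [Nat.zero_le (i*B), Nat.zero_le (j*B), Nat.zero_le (k*B), Nat.zero_le (i*M'), Nat.zero_le (j*M'), Nat.zero_le (k*M'), Nat.zero_le (i*a), Nat.zero_le (j*b), Nat.zero_le (k*c)]
      · have hge' : i + 1 ≤ k := by omega
        have h1 : (i + 1) * (x + 1) ≤ k * (x + 1) := Nat.mul_le_mul hge' le_rfl
        have h2 : k * (x + 1) ≤ k * c := Nat.mul_le_mul le_rfl hc1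
        have h3 : i * a ≤ i * (x + (M' + 1)) := Nat.mul_le_mul le_rfl ha2
        have h4 : j * b ≤ j * B := Nat.mul_le_mul le_rfl hb2
        linarith [Nat.zero_le (i*B), Nat.zero_le (j*B), Nat.zero_le (k*B), Nat.zero_le (i*M'), Nat.zero_le (j*M'), Nat.zero_le (k*M'), Nat.zero_le (i*a), Nat.zero_le (j*b), Nat.zero_le (k*c)]
    · -- a high, b low, c low
      have h1 : k * c ≤ k * B := Nat.mul_le_mul le_rfl hc2
      have h2 : a ≤ i * a := Nat.le_mul_of_pos_left a hi
      linarith [Nat.zero_le (i*B), Nat.zero_le (j*B), Nat.zero_le (k*B), Nat.zero_le (i*M'), Nat.zero_le (j*M'), Nat.zero_le (k*M'), Nat.zero_le (i*a), Nat.zero_le (j*b), Nat.zero_le (k*c)]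
    · -- b, c high, a low : needs k ≠ j
      rcases Nat.lt_or_ge k j with hlt | hge
      · have h1 : (k + 1) * (x + 1) ≤ j * (x + 1) := Nat.mul_le_mul (by omega) le_rfl
        have h2 : j * (x + 1) ≤ j * b := Nat.mul_le_mul le_rfl hb1
        have h3 : k * c ≤ k * (x + (M' + 1)) := Nat.mul_le_mul le_rfl hc2
        linarith [Nat.zero_le (i*B), Nat.zero_le (j*B), Nat.zero_le (k*B), Nat.zero_le (i*M'), Nat.zero_le (j*M'), Nat.zero_le (k*M'), Nat.zero_le (i*a), Nat.zero_le (j*b), Nat.zero_le (k*c)]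
      · have hge' : j + 1 ≤ k := by omega
        have h1 : (j + 1) * (x + 1) ≤ k * (x + 1) := Nat.mul_le_mul hge' le_rfl
        have h2 : k * (x + 1) ≤ k * c := Nat.mul_le_mul le_rfl hc1
        have h3 : j * b ≤ j * (x + (M' + 1)) := Nat.mul_le_mul le_rfl hb2
        have h4 : i * a ≤ i * B := Nat.mul_le_mul le_rfl ha2
        linarith [Nat.zero_le (i*B), Nat.zero_le (j*B), Nat.zero_le (k*B), Nat.zero_le (i*M'), Nat.zero_le (j*M'), Nat.zero_le (k*M'), Nat.zero_le (i*a), Nat.zero_le (j*b), Nat.zero_le (k*c)]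
    · -- b high, c low
      have h1 : k * c ≤ k * B := Nat.mul_le_mul le_rfl hc2
      have h2 : b ≤ j * b := Nat.le_mul_of_pos_left b hj
      linarith [Nat.zero_le (i*B), Nat.zero_le (j*B), Nat.zero_le (k*B), Nat.zero_le (i*M'), Nat.zero_le (j*M'), Nat.zero_le (k*M'), Nat.zero_le (i*a), Nat.zero_le (j*b), Nat.zero_le (k*c)]
    · -- c high, a b low
      have h1 : i * a ≤ i * B := Nat.mul_le_mul le_rfl ha2
      have h2 : j * b ≤ j * B := Nat.mul_le_mul le_rfl hb2
      have h3 : c ≤ k * c := Nat.le_mul_of_pos_left c hk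
      linarith [Nat.zero_le (i*B), Nat.zero_le (j*B), Nat.zero_le (k*B), Nat.zero_le (i*M'), Nat.zero_le (j*M'), Nat.zero_le (k*M'), Nat.zero_le (i*a), Nat.zero_le (j*b), Nat.zero_le (k*c)]
    · -- all low : contradicts the max
      omega
  · rintro (h | h | h) <;> intro S hS
    · -- k = i
      obtain ⟨a0, ha0⟩ := hS i
      have hmod : a0 % i < i := Nat.mod_lt _ hi
      have ht1 : 1 ≤ i - a0 % i := by omega
      have ht2 : i - a0 % i ≤ i := by omega
      have hb : a0 + (i - a0 % i) ∈ S := ha0 _ ht1 ht2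
      have hdvd : i ∣ (a0 + (i - a0 % i)) := by
        have h3 := Nat.div_add_mod a0 i
        refine ⟨a0 / i + 1, ?_⟩
        have : i * (a0 / i + 1) = i * (a0 / i) + i := by ring
        omega
      have hdvd2 : i ∣ j * (a0 + (i - a0 % i)) := Dvd.dvd.mul_left hdvd j
      have hd : i * (j * (a0 + (i - a0 % i)) / i) = j * (a0 + (i - a0 % i)) :=
        Nat.mul_div_cancel' hdvd2
      set d := j * (a0 + (i - a0 % i)) / i with hddef
      obtain ⟨a1, ha1⟩ := hS (d + 1)
      refine ⟨a1 + 1, ha1 1 le_rfl (Nat.le_add_left 1 d), a0 + (i - a0 % i), hb,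
        a1 + (d + 1), ha1 (d + 1) (Nat.le_add_left 1 d) le_rfl, ?_⟩
      rw [h]
      have hr : i * (a1 + (d + 1)) = i * (a1 + 1) + i * d := by ring
      omega
    · -- k = j
      obtain ⟨a0, ha0⟩ := hS j
      have hmod : a0 % j < j := Nat.mod_lt _ hj
      have ht1 : 1 ≤ j - a0 % j := by omega
      have ht2 : j - a0 % j ≤ j := by omega
      have hA : a0 + (j - a0 % j) ∈ S := ha0 _ ht1 ht2
      have hdvd : j ∣ (a0 + (j - a0 % j)) := by
        have h3 := Nat.div_add_mod a0 j
        refine ⟨a0 / j + 1, ?_⟩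
        have : j * (a0 / j + 1) = j * (a0 / j) + j := by ring
        omega
      have hdvd2 : j ∣ i * (a0 + (j - a0 % j)) := Dvd.dvd.mul_left hdvd i
      have hd : j * (i * (a0 + (j - a0 % j)) / j) = i * (a0 + (j - a0 % j)) :=
        Nat.mul_div_cancel' hdvd2
      set d := i * (a0 + (j - a0 % j)) / j with hddef
      obtain ⟨a1, ha1⟩ := hS (d + 1)
      refine ⟨a0 + (j - a0 % j), hA, a1 + 1, ha1 1 le_rfl (Nat.le_add_left 1 d),
        a1 + (d + 1), ha1 (d + 1) (Nat.le_add_left 1 d) le_rfl, ?_⟩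
      rw [h]
      have hr : j * (a1 + (d + 1)) = j * (a1 + 1) + j * d := by ring
      omega
    · -- k = i + j
      obtain ⟨a0, ha0⟩ := hS 1
      have h1 : a0 + 1 ∈ S := ha0 1 le_rfl le_rfl
      exact ⟨a0 + 1, h1, a0 + 1, h1, a0 + 1, h1, by rw [h]; ring⟩
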